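/- Let X be a separable Banach space, (T,Σ,μ) a finite measure space, and x* : T → X* a weak*-measurable function such that x*(t) ∈ ∂_{ℓ(t)} f_t(x) a.e. for an integrable ℓ ≥ 0 and convex normal integrand f, where the functional x(·) ↦ ∫_T f(t, x(t)) dμ is bounded above on a ‖·‖_∞-neighborhood of a constant function x₀. Then ∫_T ‖x*(t)‖ dμ(t) < +∞, i.e., x* is Gelfand (in fact Bochner if X* is separable) integrable. -/

import Mathlib

open MeasureTheory
noncomputable section

/-- The upper integral `∫ φ dμ := inf { ∫ g dμ : g ∈ L¹, φ ≤ g a.e. }`, equal to `+∞` when no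
integrable majorant exists. -/
noncomputable def upperIntegral {T : Type*} [MeasurableSpace T] (μ : Measure T)
    (φ : T → EReal) : EReal :=
  sInf {r : EReal | ∃ g : T → ℝ, Integrable g μ ∧
    (∀ᵐ t ∂μ, φ t ≤ (g t : EReal)) ∧ r = ((∫ t, g t ∂μ : ℝ) : EReal)}

/-- If `x*(·)` is a weak*-measurable, weak*-integrable selection of `∂_{ℓ(t)} f_t(x)` for a
convex normal integrand `f` on a separable Banach space, and the functional
`u(·) ↦ ∫_T f(t,u(t)) dμ` is bounded above on a `‖·‖_∞`-neighborhood of a constant function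
`x₀`, then `∫_T ‖x*(t)‖ dμ(t) < +∞`, i.e. `x*` is Gelfand integrable. -/
theorem selection_norm_integrable
    {X : Type*} [NormedAddCommGroup X] [NormedSpace ℝ X]
    [TopologicalSpace.SeparableSpace X] [CompleteSpace X]
    [MeasurableSpace X] [BorelSpace X]
    {T : Type*} [MeasurableSpace T] (μ : Measure T) [IsFiniteMeasure μ]
    (f : T → X → EReal)
    (hlsc : ∀ᵐ t ∂μ, LowerSemicontinuous (f t))
    (hconv : ∀ᵐ t ∂μ, Convex ℝ {p : X × ℝ | f t p.1 ≤ (p.2 : EReal)})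
    (hproper : ∀ᵐ t ∂μ, ∀ y : X, f t y ≠ ⊥)
    (x : X) (ℓ : T → ℝ) (hℓint : Integrable ℓ μ) (hℓ0 : ∀ᵐ t ∂μ, 0 ≤ ℓ t)
    (xs : T → StrongDual ℝ X)
    -- weak*-measurability and weak*-integrability of `x*(·)`:
    (hmeas : ∀ v : X, Measurable fun t => xs t v)
    (hwint : ∀ v : X, Integrable (fun t => xs t v) μ)
    -- `f(·, x)` is (finite and) integrable:
    (fx : T → ℝ) (hfx : ∀ᵐ t ∂μ, f t x = ((fx t : ℝ) : EReal)) (hfxint : Integrable fx μ)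
    -- `x*(t) ∈ ∂_{ℓ(t)} f_t(x)` a.e.:
    (hsel : ∀ᵐ t ∂μ, ∀ y : X,
      ((xs t y - xs t x : ℝ) : EReal) ≤ f t y - f t x + ((ℓ t : ℝ) : EReal))
    -- the integral functional is bounded above on an `L^∞`-ball around the constant `x₀`:
    (x₀ : X) (δ M : ℝ) (hδ : 0 < δ)
    (hbdd : ∀ u : T → X, Measurable u → (∀ᵐ t ∂μ, ‖u t - x₀‖ ≤ δ) →
      upperIntegral μ (fun t => f t (u t)) ≤ (M : EReal)) :
    Integrable (fun t => ‖xs t‖) μ := by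
  classical
  haveI : SecondCountableTopology X := UniformSpace.secondCountable_of_separable X
  -- a sequence in the closed unit ball witnessing the dual norm
  obtain ⟨v, hv1, hvd⟩ : ∃ v : ℕ → X, (∀ n, ‖v n‖ ≤ 1) ∧
      ∀ (t : T) (c : ℝ), c < ‖xs t‖ → ∃ n, c < xs t (v n) := by
    haveI : Nonempty (Metric.closedBall (0 : X) 1) :=
      ⟨⟨0, Metric.mem_closedBall_self zero_le_one⟩⟩
    obtain ⟨w, hw⟩ := TopologicalSpace.exists_dense_seq (Metric.closedBall (0 : X) 1)
    refine ⟨fun n => (w n : X), fun n => by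
      have h := (w n).2
      rwa [Metric.mem_closedBall, dist_eq_norm, sub_zero] at h, ?_⟩
    intro t c hc
    obtain ⟨z, hz1, hz2⟩ := (xs t).exists_lt_apply_of_lt_opNorm hc
    have hz2' : c < xs t z ∨ c < xs t (-z) := by
      rcases le_or_gt 0 (xs t z) with h | h
      · left; rwa [Real.norm_eq_abs, abs_of_nonneg h] at hz2
      · right; rw [map_neg]
        rwa [Real.norm_eq_abs, abs_of_neg h] at hz2
    obtain ⟨z', hz1', hz2'⟩ : ∃ z' : X, ‖z'‖ < 1 ∧ c < xs t z' := by
      rcases hz2' with h | h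
      · exact ⟨z, hz1, h⟩
      · exact ⟨-z, by simpa using hz1, h⟩
    have hopen : IsOpen (Subtype.val ⁻¹' {y : X | c < xs t y} :
        Set (Metric.closedBall (0 : X) 1)) :=
      (isOpen_lt continuous_const (xs t).continuous).preimage continuous_subtype_val
    have hne : (Subtype.val ⁻¹' {y : X | c < xs t y} :
        Set (Metric.closedBall (0 : X) 1)).Nonempty :=
      ⟨⟨z', by simp [Metric.mem_closedBall, dist_eq_norm, hz1'.le]⟩, hz2'⟩
    obtain ⟨n, hn⟩ := hw.exists_mem_open hopen hne
    exact ⟨n, hn⟩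
  -- measurability of the dual norm
  have hbdd_range : ∀ t, BddAbove (Set.range fun n => xs t (v n)) := by
    intro t
    refine ⟨‖xs t‖, ?_⟩
    rintro - ⟨n, rfl⟩
    calc xs t (v n) ≤ ‖xs t (v n)‖ := le_abs_self _
      _ ≤ ‖xs t‖ * ‖v n‖ := (xs t).le_opNorm (v n)
      _ ≤ ‖xs t‖ := mul_le_of_le_one_right (norm_nonneg _) (hv1 n)
  have hnorm_eq : ∀ t, ‖xs t‖ = ⨆ n, xs t (v n) := by
    intro t
    refine le_antisymm ?_ (ciSup_le fun n => ?_)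
    · by_contra h
      push_neg at h
      obtain ⟨n, hn⟩ := hvd t _ h
      exact absurd (le_ciSup (hbdd_range t) n) (not_le.mpr hn)
    · calc xs t (v n) ≤ ‖xs t (v n)‖ := le_abs_self _
        _ ≤ ‖xs t‖ * ‖v n‖ := (xs t).le_opNorm (v n)
        _ ≤ ‖xs t‖ := mul_le_of_le_one_right (norm_nonneg _) (hv1 n)
  have hφm : Measurable fun t => ‖xs t‖ := by
    have : (fun t => ‖xs t‖) = fun t => ⨆ n, xs t (v n) := funext hnorm_eq
    rw [this]
    exact Measurable.iSup fun n => hmeas (v n)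
  -- measurable near-maximizing selection
  have hex : ∀ t, ∃ n, ‖xs t‖ - 1 < xs t (v n) := fun t => hvd t _ (sub_one_lt _)
  set N : T → ℕ := fun t => Nat.find (hex t) with hN_def
  have hN_meas : Measurable N :=
    measurable_find hex fun k =>
      measurableSet_lt (hφm.sub measurable_const) (hmeas (v k))
  have hN_spec : ∀ t, ‖xs t‖ - 1 < xs t (v (N t)) := fun t => Nat.find_spec (hex t)
  set u : T → X := fun t => x₀ + δ • v (N t) with hu_def
  have hu_meas : Measurable u := by
    have h1 : Measurable fun t => v (N t) := measurable_from_top.comp hN_meas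
    exact ((continuous_const.add (continuous_id.const_smul δ)).measurable).comp h1
  have hu_bd : ∀ t, ‖u t - x₀‖ ≤ δ := by
    intro t
    have : ‖u t - x₀‖ = |δ| * ‖v (N t)‖ := by
      simp [hu_def, norm_smul]
    rw [this, abs_of_pos hδ]
    exact mul_le_of_le_one_right hδ.le (hv1 (N t))
  -- extract an integrable majorant of `f t (u t)`
  have hub := hbdd u hu_meas (Filter.Eventually.of_forall hu_bd)
  rw [upperIntegral] at hub
  obtain ⟨r, g, hg_int, hg_ae, -⟩ :
      ∃ r : EReal, ∃ g : T → ℝ, Integrable g μ ∧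
        (∀ᵐ t ∂μ, f t (u t) ≤ (g t : EReal)) ∧ r = ((∫ t, g t ∂μ : ℝ) : EReal) := by
    by_contra h
    push_neg at h
    have hempty : {r : EReal | ∃ g : T → ℝ, Integrable g μ ∧
        (∀ᵐ t ∂μ, f t (u t) ≤ (g t : EReal)) ∧ r = ((∫ t, g t ∂μ : ℝ) : EReal)} = ∅ := by
      ext r
      simp only [Set.mem_setOf_eq, Set.mem_empty_iff_false, iff_false]
      rintro ⟨g, hg1, hg2, hg3⟩
      exact h r g hg1 hg2 hg3
    rw [hempty, sInf_empty] at hub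
    exact absurd hub (not_le.mpr (EReal.coe_lt_top M))
  -- the integrable dominating function
  set G : T → ℝ := fun t => (g t - fx t + ℓ t + xs t x - xs t x₀) / δ + 1 with hG_def
  have hG_int : Integrable G μ :=
    (((((hg_int.sub hfxint).add hℓint).add (hwint x)).sub (hwint x₀)).div_const δ).add
      (integrable_const 1)
  have hae : ∀ᵐ t ∂μ, ‖xs t‖ ≤ G t := by
    filter_upwards [hsel, hfx, hg_ae] with t hsel_t hfx_t hg_t
    have key : ((xs t (u t) - xs t x : ℝ) : EReal) ≤
        ((g t - fx t + ℓ t : ℝ) : EReal) := by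
      refine (hsel_t (u t)).trans ?_
      rw [hfx_t]
      have h1 : f t (u t) - ((fx t : ℝ) : EReal) ≤ (g t : EReal) - ((fx t : ℝ) : EReal) :=
        EReal.sub_le_sub hg_t le_rfl
      calc f t (u t) - ((fx t : ℝ) : EReal) + ((ℓ t : ℝ) : EReal)
          ≤ (g t : EReal) - ((fx t : ℝ) : EReal) + ((ℓ t : ℝ) : EReal) :=
            add_le_add_left h1 _
        _ = ((g t - fx t + ℓ t : ℝ) : EReal) := by norm_cast
    have key' : xs t (u t) - xs t x ≤ g t - fx t + ℓ t := EReal.coe_le_coe_iff.mp key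
    have hval : xs t (u t) = xs t x₀ + δ * xs t (v (N t)) := by
      simp [hu_def, map_add, _root_.map_smul, smul_eq_mul]
    have h2 : ‖xs t‖ - 1 < xs t (v (N t)) := hN_spec t
    have h3 : δ * (‖xs t‖ - 1) ≤ δ * xs t (v (N t)) :=
      mul_le_mul_of_nonneg_left h2.le hδ.le
    have h4 : δ * (‖xs t‖ - 1) ≤ g t - fx t + ℓ t + xs t x - xs t x₀ := by
      nlinarith [hval, key', h3]
    have h5 : ‖xs t‖ - 1 ≤ (g t - fx t + ℓ t + xs t x - xs t x₀) / δ := by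
      rw [le_div_iff₀ hδ]; nlinarith [h4]
    show ‖xs t‖ ≤ (g t - fx t + ℓ t + xs t x - xs t x₀) / δ + 1
    linarith
  refine hG_int.mono hφm.aestronglyMeasurable ?_
  filter_upwards [hae] with t ht
  rw [Real.norm_eq_abs, Real.norm_eq_abs, abs_of_nonneg (norm_nonneg _)]
  exact ht.trans (le_abs_self _)
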